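/- Spectrum of the trapeze T_θ: let θ ∈ (0, π/2) and let T_θ be the trapeze with vertices A_1 = (cos θ, sin θ), A_2 = (−cos θ, sin θ), A_3 = (−tan θ · sin θ, −sin θ), A_4 = (tan θ · sin θ, −sin θ) in ℝ², whose side lengths are ℓ_1 = 2cos θ, ℓ_2 = ℓ_4 = 1/cos θ, ℓ_3 = 2 tan θ sin θ. Define Spec(T_θ) as the set of λ ∈ ℝ for which there exists a nonzero (α, β) ∈ ℝ⁴ × ℝ⁴ satisfying, cyclically in i (indices mod 4), α_{i+1} = α_i + β_i and λ α_i = β_{i−1}/ℓ_{i−1} − β_i/ℓ_i. Then Spec(T_θ) = { 0, 2cos θ, 1/(cos θ · sin² θ) }, and 2cos θ is the smallest nonzero element of Spec(T_θ). -/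

import Mathlib

open scoped Real

noncomputable section

/-- The side lengths of the trapeze `T_θ` with vertices
`A₁ = (cos θ, sin θ)`, `A₂ = (−cos θ, sin θ)`, `A₃ = (−tan θ sin θ, −sin θ)`,
`A₄ = (tan θ sin θ, −sin θ)`: `ℓ₁ = 2 cos θ`, `ℓ₂ = ℓ₄ = 1/cos θ`, `ℓ₃ = 2 tan θ sin θ`.
The index `i ∈ ZMod 4` labels the side `[Aᵢ, Aᵢ₊₁]` (with `0 = 4`). -/
def trapezeLen (θ : ℝ) : ZMod 4 → ℝ := fun i =>
  if i = 1 then 2 * Real.cos θ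
  else if i = 2 then 1 / Real.cos θ
  else if i = 3 then 2 * Real.tan θ * Real.sin θ
  else 1 / Real.cos θ

/-- The spectrum of the trapeze `T_θ`: the set of `λ ∈ ℝ` admitting a nonzero
piecewise-affine eigenfunction, encoded by `(α, β)` with `αᵢ₊₁ = αᵢ + βᵢ` and
`λ αᵢ = βᵢ₋₁/ℓᵢ₋₁ − βᵢ/ℓᵢ`, indices cyclic mod `4`. -/
def trapezeSpec (θ : ℝ) : Set ℝ :=
  { lam : ℝ | ∃ α β : ZMod 4 → ℝ, (α, β) ≠ 0 ∧
      (∀ i, α (i + 1) = α i + β i) ∧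
      (∀ i, lam * α i = β (i - 1) / trapezeLen θ (i - 1) - β i / trapezeLen θ i) }

/-- Linear-algebra core: if `(α,β)` is an eigenvector for `λ ∉ {0, 2c, 1/(cs²)}`,
then `α = 0`. -/
lemma trapeze_lin (c s lam a0 a1 a2 a3 b0 b1 b2 b3 : ℝ)
    (hc : 0 < c) (hs : 0 < s) (hp : s^2 + c^2 = 1)
    (hb0 : b0 = a1 - a0) (hb1 : b1 = a2 - a1) (hb2 : b2 = a3 - a2) (hb3 : b3 = a0 - a3)
    (E0 : lam * a0 = b3 / (2*(s/c)*s) - b0 / (1/c))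
    (E1 : lam * a1 = b0 / (1/c) - b1 / (2*c))
    (E2 : lam * a2 = b1 / (2*c) - b2 / (1/c))
    (E3 : lam * a3 = b2 / (1/c) - b3 / (2*(s/c)*s))
    (h0 : lam ≠ 0) (h2 : lam ≠ 2*c) (h3 : lam ≠ 1/(c*s^2)) :
    a0 = 0 ∧ a1 = 0 ∧ a2 = 0 ∧ a3 = 0 := by
  have hc' : c ≠ 0 := ne_of_gt hc
  have hs' : s ≠ 0 := ne_of_gt hs
  subst hb0 hb1 hb2 hb3
  have F0 : lam * a0 * (2*s^2) = (a0-a3)*c - (a1-a0)*(2*s^2)*c := by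
    field_simp at E0; linear_combination E0
  have F1 : lam * a1 * (2*c) = (a1-a0)*c*(2*c) - (a2-a1) := by
    field_simp at E1; linear_combination E1
  have F2 : lam * a2 * (2*c) = (a2-a1) - (a3-a2)*c*(2*c) := by
    field_simp at E2; linear_combination E2
  have F3 : lam * a3 * (2*s^2) = (a3-a2)*(2*s^2)*c - (a0-a3)*c := by
    field_simp at E3; linear_combination E3
  have hS : lam * (a0+a1+a2+a3) * (2*s^2*c) = 0 := by
    linear_combination c*F0 + s^2*F1 + s^2*F2 + c*F3
  have hP : (lam - 2*c) * (-a0+a1+a2-a3) * (2*s^2*c) = 0 := by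
    linear_combination (-c)*F0 + s^2*F1 + s^2*F2 + (-c)*F3
  have hQ : (lam - 2*c) * (s^2*a0+c^2*a1-c^2*a2-s^2*a3) * (2*s^2*c) = 0 := by
    linear_combination (c*s^2)*F0 + (c^2*s^2)*F1 - (c^2*s^2)*F2 - (c*s^2)*F3
      - 2*c^2*s^2*(a0+a1-a2-a3)*hp
  have hR : (lam*c*s^2 - 1) * (-c^2*a0+s^2*a1-s^2*a2+c^2*a3) * 2 = 0 := by
    linear_combination (-c^3)*F0 + s^4*F1 - s^4*F2 + c^3*F3
      + 2*c^2*s^2*(a1-a0+a3-a2)*hp - 2*(c^2*a0 - s^2*a1 + s^2*a2 - c^2*a3)*hp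
  have hcs : (0:ℝ) < 2*s^2*c := by positivity
  have hSum : a0+a1+a2+a3 = 0 := by
    rcases mul_eq_zero.mp hS with h | h
    · rcases mul_eq_zero.mp h with h' | h'
      · exact absurd h' h0
      · exact h'
    · linarith
  have hPP : -a0+a1+a2-a3 = 0 := by
    rcases mul_eq_zero.mp hP with h | h
    · rcases mul_eq_zero.mp h with h' | h'
      · exact absurd (by linarith : lam = 2*c) h2
      · exact h'
    · linarith
  have hQQ : s^2*a0+c^2*a1-c^2*a2-s^2*a3 = 0 := by
    rcases mul_eq_zero.mp hQ with h | h
    · rcases mul_eq_zero.mp h with h' | h'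
      · exact absurd (by linarith : lam = 2*c) h2
      · exact h'
    · linarith
  have hRR : -c^2*a0+s^2*a1-s^2*a2+c^2*a3 = 0 := by
    rcases mul_eq_zero.mp hR with h | h
    · rcases mul_eq_zero.mp h with h' | h'
      · exfalso
        apply h3
        field_simp
        linear_combination h'
      · exact h'
    · norm_num at h
  have e1 : a1 + a2 = 0 := by linarith
  have e2 : a0 + a3 = 0 := by linarith
  have e3 : s^2*a0 + c^2*a1 = 0 := by
    linear_combination (1/2)*hQQ + (c^2/2)*e1 + (s^2/2)*e2
  have e4 : c^2*a0 - s^2*a1 = 0 := by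
    linear_combination (-1/2)*hRR - (s^2/2)*e1 + (c^2/2)*e2
  have h40 : (s^4+c^4)*a0 = 0 := by linear_combination s^2*e3 + c^2*e4
  have hsc4 : (0:ℝ) < s^4 + c^4 := by positivity
  have ha0 : a0 = 0 := by
    rcases mul_eq_zero.mp h40 with h | h
    · linarith
    · exact h
  have ha1 : a1 = 0 := by
    have : s^2*a1 = 0 := by linear_combination c^2*ha0 - e4
    rcases mul_eq_zero.mp this with h | h
    · exact absurd h (pow_ne_zero 2 hs')
    · exact h
  exact ⟨ha0, ha1, by linarith, by linarith⟩

/-- **Spectrum of the trapeze `T_θ`**: for `θ ∈ (0, π/2)`,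
`Spec(T_θ) = {0, 2 cos θ, 1/(cos θ sin² θ)}`, and `2 cos θ` is its smallest nonzero
element. -/
theorem trapeze_spectrum (θ : ℝ) (hθ : θ ∈ Set.Ioo 0 (π / 2)) :
    trapezeSpec θ = {0, 2 * Real.cos θ, 1 / (Real.cos θ * Real.sin θ ^ 2)} ∧
      IsLeast { x : ℝ | x ∈ trapezeSpec θ ∧ x ≠ 0 } (2 * Real.cos θ) := by
  obtain ⟨hθ0, hθ2⟩ := hθ
  have hpi := Real.pi_pos
  have hc : 0 < Real.cos θ := Real.cos_pos_of_mem_Ioo ⟨by linarith, hθ2⟩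
  have hs : 0 < Real.sin θ := Real.sin_pos_of_pos_of_lt_pi hθ0 (by linarith)
  have hc' : Real.cos θ ≠ 0 := ne_of_gt hc
  have hs' : Real.sin θ ≠ 0 := ne_of_gt hs
  have hp : Real.sin θ ^ 2 + Real.cos θ ^ 2 = 1 := Real.sin_sq_add_cos_sq θ
  have htan : Real.tan θ = Real.sin θ / Real.cos θ := Real.tan_eq_sin_div_cos θ
  have L0 : trapezeLen θ 0 = 1 / Real.cos θ := by
    simp [trapezeLen, (by decide : (0:ZMod 4) ≠ 1), (by decide : (0:ZMod 4) ≠ 2),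
      (by decide : (0:ZMod 4) ≠ 3)]
  have L1 : trapezeLen θ 1 = 2 * Real.cos θ := by simp [trapezeLen]
  have L2 : trapezeLen θ 2 = 1 / Real.cos θ := by
    simp [trapezeLen, (by decide : (2:ZMod 4) ≠ 1)]
  have L3 : trapezeLen θ 3 = 2 * (Real.sin θ / Real.cos θ) * Real.sin θ := by
    simp [trapezeLen, (by decide : (3:ZMod 4) ≠ 1), (by decide : (3:ZMod 4) ≠ 2), htan]
  have z0 : (0:ZMod 4) + 1 = 1 := by decide
  have z1 : (1:ZMod 4) + 1 = 2 := by decide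
  have z2 : (2:ZMod 4) + 1 = 3 := by decide
  have z3 : (3:ZMod 4) + 1 = 0 := by decide
  have m0 : (0:ZMod 4) - 1 = 3 := by decide
  have m1 : (1:ZMod 4) - 1 = 0 := by decide
  have m2 : (2:ZMod 4) - 1 = 1 := by decide
  have m3 : (3:ZMod 4) - 1 = 2 := by decide
  have z4 : (4:ZMod 4) = 0 := by decide
  have hall : ∀ i : ZMod 4, i = 0 ∨ i = 1 ∨ i = 2 ∨ i = 3 := by decide
  have n10 : (1:ZMod 4) ≠ 0 := by decide
  have n20 : (2:ZMod 4) ≠ 0 := by decide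
  have n21 : (2:ZMod 4) ≠ 1 := by decide
  have n30 : (3:ZMod 4) ≠ 0 := by decide
  have n31 : (3:ZMod 4) ≠ 1 := by decide
  have n32 : (3:ZMod 4) ≠ 2 := by decide
  have hspec : trapezeSpec θ = {0, 2 * Real.cos θ, 1 / (Real.cos θ * Real.sin θ ^ 2)} := by
    ext lam
    simp only [trapezeSpec, Set.mem_setOf_eq, Set.mem_insert_iff, Set.mem_singleton_iff]
    constructor
    · rintro ⟨α, β, hne, hαβ, heq⟩
      by_contra hcon
      push_neg at hcon
      obtain ⟨h0, h2c, hmu⟩ := hcon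
      have hb0 : β 0 = α 1 - α 0 := by have h := hαβ 0; rw [z0] at h; linarith
      have hb1 : β 1 = α 2 - α 1 := by have h := hαβ 1; rw [z1] at h; linarith
      have hb2 : β 2 = α 3 - α 2 := by have h := hαβ 2; rw [z2] at h; linarith
      have hb3 : β 3 = α 0 - α 3 := by have h := hαβ 3; rw [z3] at h; linarith
      have E0 := heq 0; rw [m0, L3, L0] at E0
      have E1 := heq 1; rw [m1, L0, L1] at E1
      have E2 := heq 2; rw [m2, L1, L2] at E2
      have E3 := heq 3; rw [m3, L2, L3] at E3
      obtain ⟨ha0, ha1, ha2, ha3⟩ :=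
        trapeze_lin (Real.cos θ) (Real.sin θ) lam (α 0) (α 1) (α 2) (α 3)
          (β 0) (β 1) (β 2) (β 3) hc hs hp hb0 hb1 hb2 hb3 E0 E1 E2 E3 h0 h2c hmu
      apply hne
      have hA : α = 0 := by
        funext i
        rcases hall i with rfl | rfl | rfl | rfl <;> simpa [ha0, ha1, ha2, ha3]
      have hB : β = 0 := by
        funext i
        rcases hall i with rfl | rfl | rfl | rfl <;>
          simp [hb0, hb1, hb2, hb3, ha0, ha1, ha2, ha3]
      rw [hA, hB]; rfl
    · rintro (rfl | rfl | rfl)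
      · refine ⟨fun _ => 1, fun _ => 0, ?_, ?_, ?_⟩
        · intro h
          have := congrFun (congrArg Prod.fst h) 0
          norm_num at this
        · intro i; norm_num
        · intro i; norm_num
      · refine ⟨fun i => if i = 0 then -1 else if i = 1 then 1 else if i = 2 then 1 else -1,
          fun i => if i = 0 then 2 else if i = 1 then 0 else if i = 2 then -2 else 0, ?_, ?_, ?_⟩
        · intro h
          have := congrFun (congrArg Prod.fst h) 1
          simp only [n10] at this
          norm_num at this
        · intro i
          rcases hall i with rfl | rfl | rfl | rfl <;>
            · simp only [z0, z1, z2, z3]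
              norm_num [n10, n20, n21, n30, n31, n32]
        · intro i
          rcases hall i with rfl | rfl | rfl | rfl <;>
            · simp only [m0, m1, m2, m3, L0, L1, L2, L3]
              norm_num [z4, n10, n20, n21, n30, n31, n32]
              try field_simp
              try ring
      · refine ⟨fun i => if i = 0 then -(Real.cos θ)^2 else if i = 1 then (Real.sin θ)^2
            else if i = 2 then -(Real.sin θ)^2 else (Real.cos θ)^2,
          fun i => if i = 0 then 1 else if i = 1 then -2*(Real.sin θ)^2
            else if i = 2 then 1 else -2*(Real.cos θ)^2, ?_, ?_, ?_⟩
        · intro h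
          have := congrFun (congrArg Prod.snd h) 0
          norm_num at this
        · intro i
          rcases hall i with rfl | rfl | rfl | rfl <;>
            · simp only [z0, z1, z2, z3]
              norm_num [n10, n20, n21, n30, n31, n32]
              try linarith [hp]
        · intro i
          rcases hall i with rfl | rfl | rfl | rfl <;>
            · simp only [m0, m1, m2, m3, L0, L1, L2, L3]
              norm_num [z4, n10, n20, n21, n30, n31, n32]
              try field_simp
              try ring
              try first
              | linear_combination (2*Real.cos θ^2*Real.sin θ^2)*hp
              | linear_combination (-2*Real.cos θ^2*Real.sin θ^2)*hp
              | linear_combination (2*Real.cos θ*Real.sin θ^2)*hp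
              | linear_combination (-2*Real.cos θ*Real.sin θ^2)*hp
              | linear_combination hp
              | linear_combination (-1)*hp
  refine ⟨hspec, ?_, ?_⟩
  · constructor
    · rw [hspec]; right; left; rfl
    · positivity
  · rintro x ⟨hx, hx0⟩
    rw [hspec] at hx
    rcases hx with rfl | rfl | rfl
    · exact absurd rfl hx0
    · exact le_rfl
    · rw [le_div_iff₀ (by positivity)]
      nlinarith [sq_nonneg (Real.sin θ), sq_nonneg (Real.cos θ), hp,
        sq_nonneg (Real.sin θ^2 - Real.cos θ^2)]
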